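/- For every n ≥ 1, the graph T_1(n) has a hamiltonian 2-factor and a 2-factor with exactly two cycles; hence T_1(n) is not pseudo 2-factor isomorphic. -/

import Mathlib

open SimpleGraph

/-- A 2-factor of `G`: a spanning subgraph in which every vertex has degree exactly 2. -/
def SimpleGraph.IsTwoFactor {V : Type*} (G F : SimpleGraph V) : Prop :=
  F ≤ G ∧ ∀ v : V, (F.neighborSet v).ncard = 2

/-- The number of cycles of a 2-factor, i.e. its number of connected components. -/
noncomputable def SimpleGraph.numCycles {V : Type*} (F : SimpleGraph V) : ℕ :=
  Nat.card F.ConnectedComponent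

/-- A graph is pseudo 2-factor isomorphic if all its 2-factors have the same
parity of number of cycles. -/
def SimpleGraph.PseudoTwoFactorIsomorphic {V : Type*} (G : SimpleGraph V) : Prop :=
  ∀ F₁ F₂ : SimpleGraph V, G.IsTwoFactor F₁ → G.IsTwoFactor F₂ →
    F₁.numCycles % 2 = F₂.numCycles % 2

/-- Vertices of one segment `G_T` (20 vertices): `Sum.inl (a, j)` with
`a = 0,1,2,3,4,5` standing for `u^{j+1}, w^{j+1}, x^{j+1}, y^{j+1}, z^{j+1}, v^{j+1}`
(`j : Fin 3`), and `Sum.inr 0 = t¹`, `Sum.inr 1 = t²`. -/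
abbrev SegV : Type := Fin 6 × Fin 3 ⊕ Fin 2

/-- Adjacency inside the segment graph `G_T` (Boben's construction):
`u^j ∼ w^k` and `y^j ∼ z^k` for the pairs with `j + k ≠ 2` (0-indexed),
`w^j ∼ x^j`, `x^j ∼ y^j`, `z^j ∼ v^j`, `x^j ∼ t¹`, `v^j ∼ t²`. -/
def segAdj : SegV → SegV → Prop
  | Sum.inl (a, j), Sum.inl (b, k) =>
      (a = 0 ∧ b = 1 ∧ (j : ℕ) + (k : ℕ) ≠ 2) ∨
      (a = 1 ∧ b = 2 ∧ j = k) ∨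
      (a = 2 ∧ b = 3 ∧ j = k) ∨
      (a = 3 ∧ b = 4 ∧ (j : ℕ) + (k : ℕ) ≠ 2) ∨
      (a = 4 ∧ b = 5 ∧ j = k)
  | Sum.inl (a, _), Sum.inr t => (a = 2 ∧ t = 0) ∨ (a = 5 ∧ t = 1)
  | _, _ => False

/-- `T(n)`: `n` copies of the segment graph `G_T`, consecutive copies linked by the
edges `v_{i-1}^j u_i^j`, `j = 1,2,3`. -/
def Tgraph (n : ℕ) : SimpleGraph (Fin n × SegV) :=
  SimpleGraph.fromRel fun p q =>
    (p.1 = q.1 ∧ segAdj p.2 q.2) ∨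
    ((p.1 : ℕ) + 1 = (q.1 : ℕ) ∧ ∃ j : Fin 3, p.2 = Sum.inl (5, j) ∧ q.2 = Sum.inl (0, j))

/-- `T₁(n)`: `T(n)` plus the edges `u₁^j v_n^j`, `j = 1,2,3`. -/
def T1 (n : ℕ) : SimpleGraph (Fin n × SegV) :=
  SimpleGraph.fromRel fun p q =>
    (Tgraph n).Adj p q ∨
    ((p.1 : ℕ) = 0 ∧ (q.1 : ℕ) = n - 1 ∧
      ∃ j : Fin 3, p.2 = Sum.inl (0, j) ∧ q.2 = Sum.inl (5, j))



def nextH (s : SegV) : SegV :=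
  if s = Sum.inl (0, 0) then Sum.inl (1, 1) else
  if s = Sum.inl (1, 1) then Sum.inl (0, 2) else
  if s = Sum.inl (0, 2) then Sum.inl (1, 2) else
  if s = Sum.inl (1, 2) then Sum.inl (0, 1) else
  if s = Sum.inl (0, 1) then Sum.inl (1, 0) else
  if s = Sum.inl (1, 0) then Sum.inl (2, 0) else
  if s = Sum.inl (2, 0) then Sum.inl (3, 0) else
  if s = Sum.inl (3, 0) then Sum.inl (4, 1) else
  if s = Sum.inl (4, 1) then Sum.inl (5, 1) else
  if s = Sum.inl (5, 1) then Sum.inr 1 else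
  if s = Sum.inr 1 then Sum.inl (5, 2) else
  if s = Sum.inl (5, 2) then Sum.inl (4, 2) else
  if s = Sum.inl (4, 2) then Sum.inl (3, 2) else
  if s = Sum.inl (3, 2) then Sum.inl (2, 2) else
  if s = Sum.inl (2, 2) then Sum.inr 0 else
  if s = Sum.inr 0 then Sum.inl (2, 1) else
  if s = Sum.inl (2, 1) then Sum.inl (3, 1) else
  if s = Sum.inl (3, 1) then Sum.inl (4, 0) else
  if s = Sum.inl (4, 0) then Sum.inl (5, 0) else
  Sum.inl (0, 0)

def prevH (s : SegV) : SegV :=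
  if s = Sum.inl (5, 0) then Sum.inl (4, 0) else
  if s = Sum.inl (4, 0) then Sum.inl (3, 1) else
  if s = Sum.inl (3, 1) then Sum.inl (2, 1) else
  if s = Sum.inl (2, 1) then Sum.inr 0 else
  if s = Sum.inr 0 then Sum.inl (2, 2) else
  if s = Sum.inl (2, 2) then Sum.inl (3, 2) else
  if s = Sum.inl (3, 2) then Sum.inl (4, 2) else
  if s = Sum.inl (4, 2) then Sum.inl (5, 2) else
  if s = Sum.inl (5, 2) then Sum.inr 1 else
  if s = Sum.inr 1 then Sum.inl (5, 1) else
  if s = Sum.inl (5, 1) then Sum.inl (4, 1) else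
  if s = Sum.inl (4, 1) then Sum.inl (3, 0) else
  if s = Sum.inl (3, 0) then Sum.inl (2, 0) else
  if s = Sum.inl (2, 0) then Sum.inl (1, 0) else
  if s = Sum.inl (1, 0) then Sum.inl (0, 1) else
  if s = Sum.inl (0, 1) then Sum.inl (1, 2) else
  if s = Sum.inl (1, 2) then Sum.inl (0, 2) else
  if s = Sum.inl (0, 2) then Sum.inl (1, 1) else
  if s = Sum.inl (1, 1) then Sum.inl (0, 0) else
  Sum.inl (5, 0)

def nextH2 (s : SegV) : SegV :=
  if s = Sum.inl (0, 0) then Sum.inl (1, 1) else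
  if s = Sum.inl (1, 1) then Sum.inl (0, 2) else
  if s = Sum.inl (0, 2) then Sum.inl (1, 2) else
  if s = Sum.inl (1, 2) then Sum.inl (2, 2) else
  if s = Sum.inl (2, 2) then Sum.inr 0 else
  if s = Sum.inr 0 then Sum.inl (2, 1) else
  if s = Sum.inl (2, 1) then Sum.inl (3, 1) else
  if s = Sum.inl (3, 1) then Sum.inl (4, 0) else
  if s = Sum.inl (4, 0) then Sum.inl (5, 0) else
  if s = Sum.inl (5, 0) then Sum.inl (0, 0) else
  if s = Sum.inl (0, 1) then Sum.inl (1, 0) else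
  if s = Sum.inl (1, 0) then Sum.inl (2, 0) else
  if s = Sum.inl (2, 0) then Sum.inl (3, 0) else
  if s = Sum.inl (3, 0) then Sum.inl (4, 1) else
  if s = Sum.inl (4, 1) then Sum.inl (3, 2) else
  if s = Sum.inl (3, 2) then Sum.inl (4, 2) else
  if s = Sum.inl (4, 2) then Sum.inl (5, 2) else
  if s = Sum.inl (5, 2) then Sum.inr 1 else
  if s = Sum.inr 1 then Sum.inl (5, 1) else
  Sum.inl (0, 1)

def prevH2 (s : SegV) : SegV :=
  if s = Sum.inl (5, 0) then Sum.inl (4, 0) else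
  if s = Sum.inl (4, 0) then Sum.inl (3, 1) else
  if s = Sum.inl (3, 1) then Sum.inl (2, 1) else
  if s = Sum.inl (2, 1) then Sum.inr 0 else
  if s = Sum.inr 0 then Sum.inl (2, 2) else
  if s = Sum.inl (2, 2) then Sum.inl (1, 2) else
  if s = Sum.inl (1, 2) then Sum.inl (0, 2) else
  if s = Sum.inl (0, 2) then Sum.inl (1, 1) else
  if s = Sum.inl (1, 1) then Sum.inl (0, 0) else
  if s = Sum.inl (0, 0) then Sum.inl (5, 0) else
  if s = Sum.inl (5, 1) then Sum.inr 1 else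
  if s = Sum.inr 1 then Sum.inl (5, 2) else
  if s = Sum.inl (5, 2) then Sum.inl (4, 2) else
  if s = Sum.inl (4, 2) then Sum.inl (3, 2) else
  if s = Sum.inl (3, 2) then Sum.inl (4, 1) else
  if s = Sum.inl (4, 1) then Sum.inl (3, 0) else
  if s = Sum.inl (3, 0) then Sum.inl (2, 0) else
  if s = Sum.inl (2, 0) then Sum.inl (1, 0) else
  if s = Sum.inl (1, 0) then Sum.inl (0, 1) else
  Sum.inl (5, 1)

def chan (s : SegV) : Fin 2 :=
  if s = Sum.inl (0, 0) then 0 else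
  if s = Sum.inl (1, 1) then 0 else
  if s = Sum.inl (0, 2) then 0 else
  if s = Sum.inl (1, 2) then 0 else
  if s = Sum.inl (2, 2) then 0 else
  if s = Sum.inr 0 then 0 else
  if s = Sum.inl (2, 1) then 0 else
  if s = Sum.inl (3, 1) then 0 else
  if s = Sum.inl (4, 0) then 0 else
  if s = Sum.inl (5, 0) then 0 else 1


instance decSegAdj (a b : SegV) : Decidable (segAdj a b) := by
  rcases a with ⟨x, j⟩ | t <;> rcases b with ⟨y, k⟩ | u <;>
    simp only [segAdj] <;> infer_instance

section Aux

variable {m : ℕ}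

abbrev Vm (m : ℕ) := Fin (m + 1) × SegV

def sigH (m : ℕ) (p : Vm m) : Vm m :=
  (if p.2 = Sum.inl (5, 0) then p.1 + 1 else p.1, nextH p.2)

def sigHinv (m : ℕ) (p : Vm m) : Vm m :=
  (if p.2 = Sum.inl (0, 0) then p.1 - 1 else p.1, prevH p.2)

def sig2 (m : ℕ) (p : Vm m) : Vm m :=
  (if p.2 = Sum.inl (5, 0) ∨ p.2 = Sum.inl (5, 1) then p.1 + 1 else p.1, nextH2 p.2)

def sig2inv (m : ℕ) (p : Vm m) : Vm m :=
  (if p.2 = Sum.inl (0, 0) ∨ p.2 = Sum.inl (0, 1) then p.1 - 1 else p.1, prevH2 p.2)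

lemma nextH_ne : ∀ s : SegV, nextH s ≠ s := by decide
lemma nextH2_ne : ∀ s : SegV, nextH2 s ≠ s := by decide
lemma nextH_sq : ∀ s : SegV, nextH (nextH s) ≠ s := by decide
lemma nextH2_sq : ∀ s : SegV, nextH2 (nextH2 s) ≠ s := by decide
lemma prev_nextH : ∀ s : SegV, prevH (nextH s) = s := by decide
lemma next_prevH : ∀ s : SegV, nextH (prevH s) = s := by decide
lemma prev_nextH2 : ∀ s : SegV, prevH2 (nextH2 s) = s := by decide
lemma next_prevH2 : ∀ s : SegV, nextH2 (prevH2 s) = s := by decide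
lemma nextH_u0 : ∀ s : SegV, nextH s = Sum.inl (0, 0) ↔ s = Sum.inl (5, 0) := by decide
lemma prevH_v0 : ∀ s : SegV, prevH s = Sum.inl (5, 0) ↔ s = Sum.inl (0, 0) := by decide
lemma nextH2_u : ∀ s : SegV,
    (nextH2 s = Sum.inl (0, 0) ∨ nextH2 s = Sum.inl (0, 1)) ↔
      (s = Sum.inl (5, 0) ∨ s = Sum.inl (5, 1)) := by decide
lemma prevH2_v : ∀ s : SegV,
    (prevH2 s = Sum.inl (5, 0) ∨ prevH2 s = Sum.inl (5, 1)) ↔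
      (s = Sum.inl (0, 0) ∨ s = Sum.inl (0, 1)) := by decide
lemma seg_edgeH : ∀ s : SegV, s ≠ Sum.inl (5, 0) →
    (segAdj s (nextH s) ∨ segAdj (nextH s) s) := by decide
lemma seg_edge2 : ∀ s : SegV, ¬(s = Sum.inl (5, 0) ∨ s = Sum.inl (5, 1)) →
    (segAdj s (nextH2 s) ∨ segAdj (nextH2 s) s) := by decide
lemma chan_next : ∀ s : SegV, chan (nextH2 s) = chan s := by decide

lemma sigH_ne (p : Vm m) : sigH m p ≠ p := fun h => nextH_ne p.2 (congrArg Prod.snd h)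
lemma sig2_ne (p : Vm m) : sig2 m p ≠ p := fun h => nextH2_ne p.2 (congrArg Prod.snd h)

def FH (m : ℕ) : SimpleGraph (Vm m) where
  Adj p q := sigH m p = q ∨ sigH m q = p
  symm := ⟨by intro p q h; tauto⟩
  loopless := ⟨by intro p h; rcases h with h | h <;> exact sigH_ne p h⟩

def F2 (m : ℕ) : SimpleGraph (Vm m) where
  Adj p q := sig2 m p = q ∨ sig2 m q = p
  symm := ⟨by intro p q h; tauto⟩
  loopless := ⟨by intro p h; rcases h with h | h <;> exact sig2_ne p h⟩

lemma sigH_inv1 (p : Vm m) : sigHinv m (sigH m p) = p := by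
  obtain ⟨i, s⟩ := p
  unfold sigH sigHinv
  simp only [prev_nextH, nextH_u0]
  by_cases hs : s = Sum.inl (5, 0)
  · rw [if_pos hs, if_pos hs, Prod.mk.injEq]
    exact ⟨add_sub_cancel_right _ _, rfl⟩
  · rw [if_neg hs, if_neg hs]

lemma sigH_inv2 (p : Vm m) : sigH m (sigHinv m p) = p := by
  obtain ⟨i, s⟩ := p
  unfold sigH sigHinv
  simp only [next_prevH, prevH_v0]
  by_cases hs : s = Sum.inl (0, 0)
  · rw [if_pos hs, if_pos hs, Prod.mk.injEq]
    exact ⟨sub_add_cancel _ _, rfl⟩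
  · rw [if_neg hs, if_neg hs]

lemma sig2_inv1 (p : Vm m) : sig2inv m (sig2 m p) = p := by
  obtain ⟨i, s⟩ := p
  unfold sig2 sig2inv
  simp only [prev_nextH2, nextH2_u]
  by_cases hs : s = Sum.inl (5, 0) ∨ s = Sum.inl (5, 1)
  · rw [if_pos hs, if_pos hs, Prod.mk.injEq]
    exact ⟨add_sub_cancel_right _ _, rfl⟩
  · rw [if_neg hs, if_neg hs]

lemma sig2_inv2 (p : Vm m) : sig2 m (sig2inv m p) = p := by
  obtain ⟨i, s⟩ := p
  unfold sig2 sig2inv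
  simp only [next_prevH2, prevH2_v]
  by_cases hs : s = Sum.inl (0, 0) ∨ s = Sum.inl (0, 1)
  · rw [if_pos hs, if_pos hs, Prod.mk.injEq]
    exact ⟨sub_add_cancel _ _, rfl⟩
  · rw [if_neg hs, if_neg hs]

lemma FH_nbhd (p : Vm m) : (FH m).neighborSet p = {sigH m p, sigHinv m p} := by
  ext q
  show (sigH m p = q ∨ sigH m q = p) ↔ q = sigH m p ∨ q = sigHinv m p
  constructor
  · rintro (h | h)
    · exact Or.inl h.symm
    · exact Or.inr (by rw [← h, sigH_inv1])
  · rintro (h | h)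
    · exact Or.inl h.symm
    · exact Or.inr (by rw [h, sigH_inv2])

lemma F2_nbhd (p : Vm m) : (F2 m).neighborSet p = {sig2 m p, sig2inv m p} := by
  ext q
  show (sig2 m p = q ∨ sig2 m q = p) ↔ q = sig2 m p ∨ q = sig2inv m p
  constructor
  · rintro (h | h)
    · exact Or.inl h.symm
    · exact Or.inr (by rw [← h, sig2_inv1])
  · rintro (h | h)
    · exact Or.inl h.symm
    · exact Or.inr (by rw [h, sig2_inv2])

lemma FH_deg (p : Vm m) : ((FH m).neighborSet p).ncard = 2 := by
  rw [FH_nbhd]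
  refine Set.ncard_pair fun h => ?_
  have := congrArg (sigH m) h
  rw [sigH_inv2] at this
  exact nextH_sq p.2 (congrArg Prod.snd this)

lemma F2_deg (p : Vm m) : ((F2 m).neighborSet p).ncard = 2 := by
  rw [F2_nbhd]
  refine Set.ncard_pair fun h => ?_
  have := congrArg (sig2 m) h
  rw [sig2_inv2] at this
  exact nextH2_sq p.2 (congrArg Prod.snd this)

lemma sigH_wrap (i : Fin (m+1)) : sigH m (i, Sum.inl (5, 0)) = (i + 1, Sum.inl (0, 0)) := rfl

lemma sigH_seg (i : Fin (m+1)) {s : SegV} (hs : s ≠ Sum.inl (5, 0)) :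
    sigH m (i, s) = (i, nextH s) := by simp [sigH, hs]

lemma sig2_wrap0 (i : Fin (m+1)) : sig2 m (i, Sum.inl (5, 0)) = (i + 1, Sum.inl (0, 0)) := rfl

lemma sig2_wrap1 (i : Fin (m+1)) : sig2 m (i, Sum.inl (5, 1)) = (i + 1, Sum.inl (0, 1)) := rfl

lemma sig2_seg (i : Fin (m+1)) {s : SegV} (hs : ¬(s = Sum.inl (5, 0) ∨ s = Sum.inl (5, 1))) :
    sig2 m (i, s) = (i, nextH2 s) := by simp [sig2, hs]

lemma tg_seg {i : Fin (m+1)} {s s' : SegV} (h : s ≠ s')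
    (h2 : segAdj s s' ∨ segAdj s' s) : (Tgraph (m+1)).Adj (i, s) (i, s') := by
  rw [Tgraph, SimpleGraph.fromRel_adj]
  refine ⟨by simp [h], ?_⟩
  rcases h2 with h2 | h2
  · exact Or.inl (Or.inl ⟨rfl, h2⟩)
  · exact Or.inr (Or.inl ⟨rfl, h2⟩)

lemma tg_cross {i i' : Fin (m+1)} (h : (i : ℕ) + 1 = (i' : ℕ)) (j : Fin 3) :
    (Tgraph (m+1)).Adj (i, Sum.inl (5, j)) (i', Sum.inl (0, j)) := by
  rw [Tgraph, SimpleGraph.fromRel_adj]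
  exact ⟨by simp, Or.inl (Or.inr ⟨h, j, rfl, rfl⟩)⟩

lemma t1_of_tg {p q : Vm m} (h : (Tgraph (m+1)).Adj p q) : (T1 (m+1)).Adj p q := by
  rw [T1, SimpleGraph.fromRel_adj]
  exact ⟨h.ne, Or.inl (Or.inl h)⟩

lemma t1_wrap {i : Fin (m+1)} (hi : (i : ℕ) = m) (j : Fin 3) :
    (T1 (m+1)).Adj (i, Sum.inl (5, j)) (0, Sum.inl (0, j)) := by
  rw [T1, SimpleGraph.fromRel_adj]
  refine ⟨by simp, Or.inr (Or.inr ⟨by simp, by simp [hi], j, rfl, rfl⟩)⟩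

lemma cross_adj {i : Fin (m+1)} (j : Fin 3) :
    (T1 (m+1)).Adj (i, Sum.inl (5, j)) (i + 1, Sum.inl (0, j)) := by
  by_cases hi : (i : ℕ) < m
  · refine t1_of_tg (tg_cross ?_ j)
    rw [Fin.val_add_one_of_lt]
    exact Fin.lt_def.mpr (by simpa using hi)
  · have him : (i : ℕ) = m := by omega
    have : i = Fin.last m := Fin.ext (by simpa using him)
    have h0 : i + 1 = 0 := by rw [this, Fin.last_add_one]
    rw [h0]
    exact t1_wrap him j

lemma FH_le : FH m ≤ T1 (m+1) := by
  have key : ∀ p : Vm m, (T1 (m+1)).Adj p (sigH m p) := by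
    rintro ⟨i, s⟩
    by_cases hs : s = Sum.inl (5, 0)
    · subst hs; rw [sigH_wrap]; exact cross_adj 0
    · rw [sigH_seg i hs]
      exact t1_of_tg (tg_seg (fun h => nextH_ne s h.symm) (seg_edgeH s hs))
  intro p q h
  rcases h with h | h
  · exact h ▸ key p
  · exact (h ▸ key q).symm

lemma F2_le : F2 m ≤ T1 (m+1) := by
  have key : ∀ p : Vm m, (T1 (m+1)).Adj p (sig2 m p) := by
    rintro ⟨i, s⟩
    by_cases hs : s = Sum.inl (5, 0) ∨ s = Sum.inl (5, 1)
    · rcases hs with hs | hs <;> subst hs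
      · rw [sig2_wrap0]; exact cross_adj 0
      · rw [sig2_wrap1]; exact cross_adj 1
    · rw [sig2_seg i hs]
      exact t1_of_tg (tg_seg (fun h => nextH2_ne s h.symm) (seg_edge2 s hs))
  intro p q h
  rcases h with h | h
  · exact h ▸ key p
  · exact (h ▸ key q).symm

lemma stepH (i : Fin (m+1)) {s : SegV} (hs : s ≠ Sum.inl (5, 0)) :
    (FH m).Reachable (i, s) (i, nextH s) :=
  SimpleGraph.Adj.reachable (Or.inl (sigH_seg i hs))

lemma step2 (i : Fin (m+1)) {s : SegV} (hs : ¬(s = Sum.inl (5, 0) ∨ s = Sum.inl (5, 1))) :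
    (F2 m).Reachable (i, s) (i, nextH2 s) :=
  SimpleGraph.Adj.reachable (Or.inl (sig2_seg i hs))

lemma reach_segH (i : Fin (m+1)) (s : SegV) :
    (FH m).Reachable (i, Sum.inl (0, 0)) (i, s) := by
  have h0 : (FH m).Reachable (i, (Sum.inl (0, 0) : SegV)) (i, (Sum.inl (0, 0) : SegV)) := Reachable.refl _
  have h1 : (FH m).Reachable (i, (Sum.inl (0, 0) : SegV)) (i, (Sum.inl (1, 1) : SegV)) :=
    h0.trans (stepH i (s := Sum.inl (0, 0)) (by decide))
  have h2 : (FH m).Reachable (i, (Sum.inl (0, 0) : SegV)) (i, (Sum.inl (0, 2) : SegV)) :=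
    h1.trans (stepH i (s := Sum.inl (1, 1)) (by decide))
  have h3 : (FH m).Reachable (i, (Sum.inl (0, 0) : SegV)) (i, (Sum.inl (1, 2) : SegV)) :=
    h2.trans (stepH i (s := Sum.inl (0, 2)) (by decide))
  have h4 : (FH m).Reachable (i, (Sum.inl (0, 0) : SegV)) (i, (Sum.inl (0, 1) : SegV)) :=
    h3.trans (stepH i (s := Sum.inl (1, 2)) (by decide))
  have h5 : (FH m).Reachable (i, (Sum.inl (0, 0) : SegV)) (i, (Sum.inl (1, 0) : SegV)) :=
    h4.trans (stepH i (s := Sum.inl (0, 1)) (by decide))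
  have h6 : (FH m).Reachable (i, (Sum.inl (0, 0) : SegV)) (i, (Sum.inl (2, 0) : SegV)) :=
    h5.trans (stepH i (s := Sum.inl (1, 0)) (by decide))
  have h7 : (FH m).Reachable (i, (Sum.inl (0, 0) : SegV)) (i, (Sum.inl (3, 0) : SegV)) :=
    h6.trans (stepH i (s := Sum.inl (2, 0)) (by decide))
  have h8 : (FH m).Reachable (i, (Sum.inl (0, 0) : SegV)) (i, (Sum.inl (4, 1) : SegV)) :=
    h7.trans (stepH i (s := Sum.inl (3, 0)) (by decide))
  have h9 : (FH m).Reachable (i, (Sum.inl (0, 0) : SegV)) (i, (Sum.inl (5, 1) : SegV)) :=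
    h8.trans (stepH i (s := Sum.inl (4, 1)) (by decide))
  have h10 : (FH m).Reachable (i, (Sum.inl (0, 0) : SegV)) (i, (Sum.inr 1 : SegV)) :=
    h9.trans (stepH i (s := Sum.inl (5, 1)) (by decide))
  have h11 : (FH m).Reachable (i, (Sum.inl (0, 0) : SegV)) (i, (Sum.inl (5, 2) : SegV)) :=
    h10.trans (stepH i (s := Sum.inr 1) (by decide))
  have h12 : (FH m).Reachable (i, (Sum.inl (0, 0) : SegV)) (i, (Sum.inl (4, 2) : SegV)) :=
    h11.trans (stepH i (s := Sum.inl (5, 2)) (by decide))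
  have h13 : (FH m).Reachable (i, (Sum.inl (0, 0) : SegV)) (i, (Sum.inl (3, 2) : SegV)) :=
    h12.trans (stepH i (s := Sum.inl (4, 2)) (by decide))
  have h14 : (FH m).Reachable (i, (Sum.inl (0, 0) : SegV)) (i, (Sum.inl (2, 2) : SegV)) :=
    h13.trans (stepH i (s := Sum.inl (3, 2)) (by decide))
  have h15 : (FH m).Reachable (i, (Sum.inl (0, 0) : SegV)) (i, (Sum.inr 0 : SegV)) :=
    h14.trans (stepH i (s := Sum.inl (2, 2)) (by decide))
  have h16 : (FH m).Reachable (i, (Sum.inl (0, 0) : SegV)) (i, (Sum.inl (2, 1) : SegV)) :=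
    h15.trans (stepH i (s := Sum.inr 0) (by decide))
  have h17 : (FH m).Reachable (i, (Sum.inl (0, 0) : SegV)) (i, (Sum.inl (3, 1) : SegV)) :=
    h16.trans (stepH i (s := Sum.inl (2, 1)) (by decide))
  have h18 : (FH m).Reachable (i, (Sum.inl (0, 0) : SegV)) (i, (Sum.inl (4, 0) : SegV)) :=
    h17.trans (stepH i (s := Sum.inl (3, 1)) (by decide))
  have h19 : (FH m).Reachable (i, (Sum.inl (0, 0) : SegV)) (i, (Sum.inl (5, 0) : SegV)) :=
    h18.trans (stepH i (s := Sum.inl (4, 0)) (by decide))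
  fin_cases s <;> assumption

def ubase (b : Fin 2) : SegV := Sum.inl (0, ⟨b.1, by omega⟩)

lemma reach_seg2 (i : Fin (m+1)) (s : SegV) :
    (F2 m).Reachable (i, ubase (chan s)) (i, s) := by
  have ha0 : (F2 m).Reachable (i, (Sum.inl (0, 0) : SegV)) (i, (Sum.inl (0, 0) : SegV)) := Reachable.refl _
  have ha1 : (F2 m).Reachable (i, (Sum.inl (0, 0) : SegV)) (i, (Sum.inl (1, 1) : SegV)) :=
    ha0.trans (step2 i (s := Sum.inl (0, 0)) (by decide))
  have ha2 : (F2 m).Reachable (i, (Sum.inl (0, 0) : SegV)) (i, (Sum.inl (0, 2) : SegV)) :=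
    ha1.trans (step2 i (s := Sum.inl (1, 1)) (by decide))
  have ha3 : (F2 m).Reachable (i, (Sum.inl (0, 0) : SegV)) (i, (Sum.inl (1, 2) : SegV)) :=
    ha2.trans (step2 i (s := Sum.inl (0, 2)) (by decide))
  have ha4 : (F2 m).Reachable (i, (Sum.inl (0, 0) : SegV)) (i, (Sum.inl (2, 2) : SegV)) :=
    ha3.trans (step2 i (s := Sum.inl (1, 2)) (by decide))
  have ha5 : (F2 m).Reachable (i, (Sum.inl (0, 0) : SegV)) (i, (Sum.inr 0 : SegV)) :=
    ha4.trans (step2 i (s := Sum.inl (2, 2)) (by decide))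
  have ha6 : (F2 m).Reachable (i, (Sum.inl (0, 0) : SegV)) (i, (Sum.inl (2, 1) : SegV)) :=
    ha5.trans (step2 i (s := Sum.inr 0) (by decide))
  have ha7 : (F2 m).Reachable (i, (Sum.inl (0, 0) : SegV)) (i, (Sum.inl (3, 1) : SegV)) :=
    ha6.trans (step2 i (s := Sum.inl (2, 1)) (by decide))
  have ha8 : (F2 m).Reachable (i, (Sum.inl (0, 0) : SegV)) (i, (Sum.inl (4, 0) : SegV)) :=
    ha7.trans (step2 i (s := Sum.inl (3, 1)) (by decide))
  have ha9 : (F2 m).Reachable (i, (Sum.inl (0, 0) : SegV)) (i, (Sum.inl (5, 0) : SegV)) :=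
    ha8.trans (step2 i (s := Sum.inl (4, 0)) (by decide))
  have hb0 : (F2 m).Reachable (i, (Sum.inl (0, 1) : SegV)) (i, (Sum.inl (0, 1) : SegV)) := Reachable.refl _
  have hb1 : (F2 m).Reachable (i, (Sum.inl (0, 1) : SegV)) (i, (Sum.inl (1, 0) : SegV)) :=
    hb0.trans (step2 i (s := Sum.inl (0, 1)) (by decide))
  have hb2 : (F2 m).Reachable (i, (Sum.inl (0, 1) : SegV)) (i, (Sum.inl (2, 0) : SegV)) :=
    hb1.trans (step2 i (s := Sum.inl (1, 0)) (by decide))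
  have hb3 : (F2 m).Reachable (i, (Sum.inl (0, 1) : SegV)) (i, (Sum.inl (3, 0) : SegV)) :=
    hb2.trans (step2 i (s := Sum.inl (2, 0)) (by decide))
  have hb4 : (F2 m).Reachable (i, (Sum.inl (0, 1) : SegV)) (i, (Sum.inl (4, 1) : SegV)) :=
    hb3.trans (step2 i (s := Sum.inl (3, 0)) (by decide))
  have hb5 : (F2 m).Reachable (i, (Sum.inl (0, 1) : SegV)) (i, (Sum.inl (3, 2) : SegV)) :=
    hb4.trans (step2 i (s := Sum.inl (4, 1)) (by decide))
  have hb6 : (F2 m).Reachable (i, (Sum.inl (0, 1) : SegV)) (i, (Sum.inl (4, 2) : SegV)) :=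
    hb5.trans (step2 i (s := Sum.inl (3, 2)) (by decide))
  have hb7 : (F2 m).Reachable (i, (Sum.inl (0, 1) : SegV)) (i, (Sum.inl (5, 2) : SegV)) :=
    hb6.trans (step2 i (s := Sum.inl (4, 2)) (by decide))
  have hb8 : (F2 m).Reachable (i, (Sum.inl (0, 1) : SegV)) (i, (Sum.inr 1 : SegV)) :=
    hb7.trans (step2 i (s := Sum.inl (5, 2)) (by decide))
  have hb9 : (F2 m).Reachable (i, (Sum.inl (0, 1) : SegV)) (i, (Sum.inl (5, 1) : SegV)) :=
    hb8.trans (step2 i (s := Sum.inr 1) (by decide))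
  fin_cases s <;> assumption


lemma crossH_reach (i : Fin (m+1)) :
    (FH m).Reachable (i, Sum.inl (5, 0)) (i + 1, Sum.inl (0, 0)) :=
  SimpleGraph.Adj.reachable (Or.inl (sigH_wrap i))

lemma cross2_reach (b : Fin 2) (i : Fin (m+1)) :
    (F2 m).Reachable (i, Sum.inl (5, ⟨b.1, by omega⟩)) (i + 1, ubase b) := by
  fin_cases b
  · exact SimpleGraph.Adj.reachable (Or.inl (sig2_wrap0 i))
  · exact SimpleGraph.Adj.reachable (Or.inl (sig2_wrap1 i))

lemma fin_succ_eq {k : ℕ} (hk : k < m + 1) (h : k + 1 < m + 1) :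
    (⟨k, hk⟩ : Fin (m+1)) + 1 = ⟨k + 1, h⟩ := by
  apply Fin.ext
  rw [Fin.val_add_one_of_lt (Fin.lt_def.mpr (by simpa using Nat.lt_of_succ_lt_succ h))]

lemma reach_colH : ∀ (k : ℕ) (h : k < m + 1),
    (FH m).Reachable (⟨0, Nat.succ_pos m⟩, Sum.inl (0, 0)) (⟨k, h⟩, Sum.inl (0, 0)) := by
  intro k
  induction k with
  | zero => intro h; exact Reachable.refl _
  | succ k ih =>
    intro h
    have hk : k < m + 1 := by omega
    have hc := crossH_reach (m := m) ⟨k, hk⟩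
    rw [fin_succ_eq hk h] at hc
    exact ((ih hk).trans (reach_segH ⟨k, hk⟩ (Sum.inl (5, 0)))).trans hc

lemma reach_col2 (b : Fin 2) : ∀ (k : ℕ) (h : k < m + 1),
    (F2 m).Reachable (⟨0, Nat.succ_pos m⟩, ubase b) (⟨k, h⟩, ubase b) := by
  intro k
  induction k with
  | zero => intro h; exact Reachable.refl _
  | succ k ih =>
    intro h
    have hk : k < m + 1 := by omega
    have hmid : (F2 m).Reachable ((⟨k, hk⟩ : Fin (m+1)), ubase b)
        ((⟨k, hk⟩ : Fin (m+1)), Sum.inl (5, ⟨b.1, by omega⟩)) := by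
      have h2 := reach_seg2 (m := m) ⟨k, hk⟩ (Sum.inl (5, ⟨b.1, by omega⟩))
      have hch : chan (Sum.inl (5, ⟨b.1, by omega⟩)) = b := by fin_cases b <;> rfl
      rwa [hch] at h2
    refine ((ih hk).trans hmid).trans ?_
    have hc := cross2_reach (m := m) b ⟨k, hk⟩
    rwa [fin_succ_eq hk h] at hc

lemma FH_connected : (FH m).Connected := by
  have base : ∀ p : Vm m, (FH m).Reachable (⟨0, Nat.succ_pos m⟩, Sum.inl (0, 0)) p := by
    rintro ⟨⟨k, hk⟩, s⟩
    exact (reach_colH k hk).trans (reach_segH _ _)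
  refine ⟨fun p q => (base p).symm.trans (base q)⟩

lemma F2_reach_base (p : Vm m) :
    (F2 m).Reachable (⟨0, Nat.succ_pos m⟩, ubase (chan p.2)) p := by
  obtain ⟨⟨k, hk⟩, s⟩ := p
  exact (reach_col2 (chan s) k hk).trans (reach_seg2 _ _)

lemma chan_adj {p q : Vm m} (h : (F2 m).Adj p q) : chan p.2 = chan q.2 := by
  rcases h with h | h
  · rw [← h]; exact (chan_next p.2).symm ▸ (chan_next p.2)
  · rw [← h]; exact chan_next q.2

lemma chan_reach {p q : Vm m} (h : (F2 m).Reachable p q) : chan p.2 = chan q.2 := by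
  obtain ⟨w⟩ := h
  induction w with
  | nil => rfl
  | cons h _ ih => exact (chan_adj h).trans ih

def F2_equiv : (F2 m).ConnectedComponent ≃ Fin 2 where
  toFun := Quot.lift (fun p => chan p.2) fun _ _ h => chan_reach h
  invFun b := (F2 m).connectedComponentMk (⟨0, Nat.succ_pos m⟩, ubase b)
  left_inv := by
    refine ConnectedComponent.ind fun p => ?_
    exact ConnectedComponent.sound (F2_reach_base p)
  right_inv b := by fin_cases b <;> rfl

lemma F2_numCycles : (F2 m).numCycles = 2 := by
  rw [SimpleGraph.numCycles, Nat.card_congr (F2_equiv (m := m)), Nat.card_eq_fintype_card,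
    Fintype.card_fin]

lemma FH_numCycles : (FH m).numCycles = 1 := by
  have hc := FH_connected (m := m)
  have hs := hc.preconnected.subsingleton_connectedComponent
  rw [SimpleGraph.numCycles]
  exact Nat.card_eq_one_iff_unique.mpr ⟨hs, ⟨(FH m).connectedComponentMk (⟨0, Nat.succ_pos m⟩, Sum.inl (0,0))⟩⟩

end Aux

theorem T1_not_pseudo_two_factor_isomorphic (n : ℕ) (hn : 1 ≤ n) :
    (∃ F : SimpleGraph (Fin n × SegV), (T1 n).IsTwoFactor F ∧ F.Connected) ∧
    (∃ F : SimpleGraph (Fin n × SegV), (T1 n).IsTwoFactor F ∧ F.numCycles = 2) ∧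
    ¬ (T1 n).PseudoTwoFactorIsomorphic := by
  obtain ⟨m, rfl⟩ : ∃ m, n = m + 1 := ⟨n - 1, by omega⟩
  have hFH : (T1 (m+1)).IsTwoFactor (FH m) := ⟨FH_le, FH_deg⟩
  have hF2 : (T1 (m+1)).IsTwoFactor (F2 m) := ⟨F2_le, F2_deg⟩
  refine ⟨⟨FH m, hFH, FH_connected⟩, ⟨F2 m, hF2, F2_numCycles⟩, fun h => ?_⟩
  have := h (FH m) (F2 m) hFH hF2
  rw [FH_numCycles, F2_numCycles] at this
  simp at this
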